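/- Let d ≥ 1 and r ∈ (0, 1]. Let w : ℝ × ℝ → ℝ^{d×d} (matrix-valued) be measurable and bounded, 1-periodic in its first argument (w(s+1, θ) = w(s, θ) for all s, θ), and satisfying w(s, θ) = 0 whenever θ ∉ [−r, 0]. Fix t ∈ ℝ, and let φ : [−1, 0] → ℝ^d and ψ : [0, 1] → ℝ^d be bounded and measurable. Suppose z : [t−1, t+1] → ℝ^d is bounded measurable with z(t+s) = φ(s) for s ∈ [−1, 0] and z(s) = ∫_{s−r}^{s} w(s, θ−s)·z(θ) dθ for all s ∈ (t, t+1], and suppose ζ : [t−1, t+1] → ℝ^d is bounded measurable with ζ(t+η) = ψ(η) for η ∈ [0, 1] and ζ(s) = ∫_{s}^{s+r} w(σ, s−σ)ᵀ·ζ(σ) dσ for all s ∈ [t−1, t). Then ∫_0^1 ⟨ ζ(t−1+η), ∫_{−1}^0 w(t+η, β−η)·φ(β) dβ ⟩ dη = ∫_0^1 ⟨ ψ(η), ∫_{−1}^0 w(t+η, β−η)·z(t+1+β) dβ ⟩ dη, where ⟨·,·⟩ is the Euclidean inner product on ℝ^d; i.e., the forward monodromy operator T(t+1, t)φ = z_{t+1}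 and the backward (adjoint) monodromy operator V(t−1, t)ψ = ζ_{t−1} are adjoint with respect to the bilinear form [ψ, φ]_t := ∫_0^1 ⟨ψ(η), ∫_{−1}^0 w(t+η, β−η)φ(β) dβ⟩ dη. -/

import Mathlib

open Real MeasureTheory intervalIntegral Matrix

namespace Stmt13Aux

variable {d : ℕ}

lemma norm_dot_le (c v : Fin d → ℝ) : ‖c ⬝ᵥ v‖ ≤ d * (‖c‖ * ‖v‖) := by
  have : ‖c ⬝ᵥ v‖ = |∑ i, c i * v i| := by simp [dotProduct]
  rw [this]
  calc |∑ i, c i * v i| ≤ ∑ i, |c i * v i| := Finset.abs_sum_le_sum_abs _ _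
    _ ≤ ∑ _i : Fin d, ‖c‖ * ‖v‖ := by
        refine Finset.sum_le_sum fun i _ => ?_
        rw [abs_mul]
        exact mul_le_mul (norm_le_pi_norm c i) (norm_le_pi_norm v i) (abs_nonneg _)
          (norm_nonneg _)
    _ = d * (‖c‖ * ‖v‖) := by simp [Finset.sum_const, Finset.card_univ, nsmul_eq_mul]

lemma norm_mulVec_le {C : ℝ} (hC : 0 ≤ C) (M : Matrix (Fin d) (Fin d) ℝ)
    (hM : ∀ i j, |M i j| ≤ C) (v : Fin d → ℝ) : ‖M *ᵥ v‖ ≤ d * (C * ‖v‖) := by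
  have hnn : (0:ℝ) ≤ d * (C * ‖v‖) := by positivity
  rw [pi_norm_le_iff_of_nonneg hnn]
  intro i
  have : (M *ᵥ v) i = ∑ j, M i j * v j := by simp [Matrix.mulVec, dotProduct]
  rw [Real.norm_eq_abs, this]
  calc |∑ j, M i j * v j| ≤ ∑ j, |M i j * v j| := Finset.abs_sum_le_sum_abs _ _
    _ ≤ ∑ _j : Fin d, C * ‖v‖ := by
        refine Finset.sum_le_sum fun j _ => ?_
        rw [abs_mul]
        exact mul_le_mul (hM i j) (norm_le_pi_norm v j) (abs_nonneg _) hC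
    _ = d * (C * ‖v‖) := by simp [Finset.sum_const, Finset.card_univ, nsmul_eq_mul]

section Meas

variable {α : Type*} [MeasurableSpace α]

lemma measurable_mulVec' {M : α → Matrix (Fin d) (Fin d) ℝ}
    (hM : Measurable fun x => Matrix.of.symm (M x))
    {f : α → Fin d → ℝ} (hf : Measurable f) : Measurable fun x => M x *ᵥ f x := by
  apply measurable_pi_lambda
  intro i
  have : (fun x => (M x *ᵥ f x) i) = fun x => ∑ j, M x i j * f x j := by
    funext x; simp [Matrix.mulVec, dotProduct]
  rw [this]
  exact Finset.measurable_sum _ fun j _ =>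
    (((measurable_pi_apply j).comp ((measurable_pi_apply i).comp hM)).mul
      ((measurable_pi_apply j).comp hf))

lemma measurable_dot {f g : α → Fin d → ℝ} (hf : Measurable f) (hg : Measurable g) :
    Measurable fun x => f x ⬝ᵥ g x := by
  have : (fun x => f x ⬝ᵥ g x) = fun x => ∑ j, f x j * g x j := by
    funext x; simp [dotProduct]
  rw [this]
  exact Finset.measurable_sum _ fun j _ =>
    ((measurable_pi_apply j).comp hf).mul ((measurable_pi_apply j).comp hg)

lemma measurable_transpose {M : α → Matrix (Fin d) (Fin d) ℝ}
    (hM : Measurable fun x => Matrix.of.symm (M x)) :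
    Measurable fun x => Matrix.of.symm ((M x)ᵀ) := by
  apply measurable_pi_lambda; intro i
  apply measurable_pi_lambda; intro j
  exact (measurable_pi_apply i).comp ((measurable_pi_apply j).comp hM)

end Meas

lemma intervalIntegrable_of_bound {E : Type*} [NormedAddCommGroup E] {f : ℝ → E}
    (hm : AEStronglyMeasurable f volume) (C : ℝ) (hb : ∀ x, ‖f x‖ ≤ C) (a b : ℝ) :
    IntervalIntegrable f volume a b := by
  constructor <;>
    exact Measure.integrableOn_of_bounded measure_Ioc_lt_top.ne hm (ae_of_all _ hb)

lemma intervalIntegral_eq_zero {E : Type*} [NormedAddCommGroup E] [NormedSpace ℝ E]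
    {f : ℝ → E} {a b : ℝ} (hab : a ≤ b) (h : ∀ x ∈ Set.Ioo a b, f x = 0) :
    ∫ x in a..b, f x = 0 := by
  rw [intervalIntegral.integral_of_le hab, MeasureTheory.integral_Ioc_eq_integral_Ioo,
    MeasureTheory.setIntegral_congr_fun measurableSet_Ioo h]
  simp

noncomputable def dotCLM (c : Fin d → ℝ) : (Fin d → ℝ) →L[ℝ] ℝ :=
  LinearMap.toContinuousLinearMap
    { toFun := fun v => c ⬝ᵥ v
      map_add' := fun x y => dotProduct_add c x y
      map_smul' := fun m x => by simpa using dotProduct_smul m c x }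

lemma dot_intervalIntegral {c : Fin d → ℝ} {f : ℝ → Fin d → ℝ} {a b : ℝ}
    (hf : IntervalIntegrable f volume a b) :
    c ⬝ᵥ (∫ x in a..b, f x) = ∫ x in a..b, c ⬝ᵥ f x :=
  ((dotCLM c).intervalIntegral_comp_comm hf).symm

lemma intervalIntegral_dot {c : Fin d → ℝ} {f : ℝ → Fin d → ℝ} {a b : ℝ}
    (hf : IntervalIntegrable f volume a b) :
    (∫ x in a..b, f x) ⬝ᵥ c = ∫ x in a..b, f x ⬝ᵥ c := by
  rw [dotProduct_comm, dot_intervalIntegral hf]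
  simp_rw [dotProduct_comm]

lemma integrable_prod_Ioc {f : ℝ × ℝ → ℝ} (hm : Measurable f) (C : ℝ) {a b c e : ℝ}
    (hb : ∀ p ∈ Set.Ioc a b ×ˢ Set.Ioc c e, ‖f p‖ ≤ C) :
    Integrable f ((volume.restrict (Set.Ioc a b)).prod (volume.restrict (Set.Ioc c e))) := by
  haveI : IsFiniteMeasure (volume.restrict (Set.Ioc a b)) :=
    ⟨by rw [Measure.restrict_apply_univ]; exact measure_Ioc_lt_top⟩
  haveI : IsFiniteMeasure (volume.restrict (Set.Ioc c e)) :=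
    ⟨by rw [Measure.restrict_apply_univ]; exact measure_Ioc_lt_top⟩
  refine ⟨hm.aestronglyMeasurable, HasFiniteIntegral.of_bounded (C := C) ?_⟩
  rw [Measure.prod_restrict]
  exact ae_restrict_of_forall_mem (measurableSet_Ioc.prod measurableSet_Ioc) hb


lemma intervalIntegrable_of_bound' {E : Type*} [NormedAddCommGroup E] {f : ℝ → E} {a b : ℝ}
    (hm : AEStronglyMeasurable f volume) (C : ℝ) (hb : ∀ x ∈ Set.uIoc a b, ‖f x‖ ≤ C) :
    IntervalIntegrable f volume a b := by
  constructor
  · exact Measure.integrableOn_of_bounded measure_Ioc_lt_top.ne hm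
      (ae_restrict_of_forall_mem measurableSet_Ioc fun x hx => hb x (Set.Ioc_subset_uIoc hx))
  · exact Measure.integrableOn_of_bounded measure_Ioc_lt_top.ne hm
      (ae_restrict_of_forall_mem measurableSet_Ioc fun x hx => hb x (Set.Ioc_subset_uIoc' hx))

lemma transpose_dot (M : Matrix (Fin d) (Fin d) ℝ) (u v : Fin d → ℝ) :
    (Mᵀ *ᵥ u) ⬝ᵥ v = u ⬝ᵥ (M *ᵥ v) := by
  rw [Matrix.mulVec_transpose, ← Matrix.dotProduct_mulVec]

end Stmt13Aux

open Stmt13Aux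


/-- The forward monodromy operator `T(t+1, t)φ = z_{t+1}` of the linear
Volterra integral equation `z(s) = ∫_{s−r}^{s} w(s, θ−s) z(θ) dθ` with
1-periodic kernel density `w` supported in `[−r, 0]`, and the backward
monodromy operator `V(t−1, t)ψ = ζ_{t−1}` of the adjoint equation
`ζ(s) = ∫_{s}^{s+r} w(σ, s−σ)ᵀ ζ(σ) dσ`, are adjoint with respect to the
bilinear form `[ψ, φ]_t = ∫₀¹ ⟨ψ(η), ∫_{−1}^0 w(t+η, β−η) φ(β) dβ⟩ dη`, i.e.
`[V(t−1,t)ψ, φ]_t = [ψ, T(t+1,t)φ]_t`. -/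
theorem stmt13 (d : ℕ) (hd : 1 ≤ d) (r : ℝ) (hr0 : 0 < r) (hr1 : r ≤ 1)
    (w : ℝ → ℝ → Matrix (Fin d) (Fin d) ℝ)
    (hwm : Measurable fun p : ℝ × ℝ => Matrix.of.symm (w p.1 p.2))
    (Cw : ℝ) (hwb : ∀ s θ i j, |w s θ i j| ≤ Cw)
    (hwper : ∀ s θ, w (s + 1) θ = w s θ)
    (hwsupp : ∀ s θ, θ ∉ Set.Icc (-r) 0 → w s θ = 0)
    (t : ℝ)
    (φ : ℝ → Fin d → ℝ) (hφm : Measurable φ)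
    (Cφ : ℝ) (hφb : ∀ s ∈ Set.Icc (-1 : ℝ) 0, ‖φ s‖ ≤ Cφ)
    (ψ : ℝ → Fin d → ℝ) (hψm : Measurable ψ)
    (Cψ : ℝ) (hψb : ∀ η ∈ Set.Icc (0 : ℝ) 1, ‖ψ η‖ ≤ Cψ)
    (z : ℝ → Fin d → ℝ) (hzm : Measurable z)
    (Cz : ℝ) (hzb : ∀ s ∈ Set.Icc (t - 1) (t + 1), ‖z s‖ ≤ Cz)
    (hzφ : ∀ s ∈ Set.Icc (-1 : ℝ) 0, z (t + s) = φ s)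
    (hz : ∀ s ∈ Set.Ioc t (t + 1), z s = ∫ θ in (s - r)..s, w s (θ - s) *ᵥ z θ)
    (ζ : ℝ → Fin d → ℝ) (hζm : Measurable ζ)
    (Cζ : ℝ) (hζb : ∀ s ∈ Set.Icc (t - 1) (t + 1), ‖ζ s‖ ≤ Cζ)
    (hζψ : ∀ η ∈ Set.Icc (0 : ℝ) 1, ζ (t + η) = ψ η)
    (hζ : ∀ s ∈ Set.Ico (t - 1) t, ζ s = ∫ σ in s..(s + r), (w σ (s - σ))ᵀ *ᵥ ζ σ) :
    (∫ η in (0 : ℝ)..1,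
        ζ (t - 1 + η) ⬝ᵥ (∫ β in (-1 : ℝ)..0, w (t + η) (β - η) *ᵥ φ β)) =
      ∫ η in (0 : ℝ)..1,
        ψ η ⬝ᵥ (∫ β in (-1 : ℝ)..0, w (t + η) (β - η) *ᵥ z (t + 1 + β)) := by
  classical
  have h1 : (t : ℝ) ≤ t + 1 := by linarith
  have h2 : (t : ℝ) - 1 ≤ t := by linarith
  have hCw0 : 0 ≤ Cw := le_trans (abs_nonneg _) (hwb 0 0 ⟨0, hd⟩ ⟨0, hd⟩)
  have hCz0 : 0 ≤ Cz := le_trans (norm_nonneg _) (hzb t ⟨by linarith, by linarith⟩)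
  have hCζ0 : 0 ≤ Cζ := le_trans (norm_nonneg _) (hζb t ⟨by linarith, by linarith⟩)
  have hwm' : Measurable fun p : ℝ × ℝ => Matrix.of.symm (w p.1 p.2) := hwm
  -- measurability of the forward integrand G a = fun θ => w a (θ - a) *ᵥ z θ
  have hGm : ∀ a : ℝ, Measurable fun θ => w a (θ - a) *ᵥ z θ := by
    intro a
    exact measurable_mulVec'
      (hwm'.comp (measurable_const.prodMk (measurable_id.sub measurable_const))) hzm
  have hHm : ∀ a : ℝ, Measurable fun σ => (w σ (a - 1 - σ))ᵀ *ᵥ ζ σ := by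
    intro a
    exact measurable_mulVec'
      (measurable_transpose
        (hwm'.comp (measurable_id.prodMk (measurable_const.sub measurable_id)))) hζm
  -- bounds
  have hGb : ∀ a ∈ Set.Icc t (t + 1), ∀ θ : ℝ, ‖w a (θ - a) *ᵥ z θ‖ ≤ d * (Cw * Cz) := by
    intro a ha θ
    by_cases hs : (θ - a) ∈ Set.Icc (-r) 0
    · have hθ : θ ∈ Set.Icc (t - 1) (t + 1) :=
        ⟨by have := hs.1; have := ha.1; linarith, by have := hs.2; have := ha.2; linarith⟩
      calc ‖w a (θ - a) *ᵥ z θ‖ ≤ d * (Cw * ‖z θ‖) :=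
            norm_mulVec_le hCw0 _ (hwb a (θ - a)) _
        _ ≤ d * (Cw * Cz) := by
            have hb := hzb θ hθ
            have : Cw * ‖z θ‖ ≤ Cw * Cz := mul_le_mul_of_nonneg_left hb hCw0
            exact mul_le_mul_of_nonneg_left this (Nat.cast_nonneg d)
    · rw [hwsupp a (θ - a) hs]
      simp only [Matrix.zero_mulVec, norm_zero]
      positivity
  have hHb : ∀ a ∈ Set.Icc t (t + 1), ∀ σ : ℝ,
      ‖(w σ (a - 1 - σ))ᵀ *ᵥ ζ σ‖ ≤ d * (Cw * Cζ) := by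
    intro a ha σ
    by_cases hs : (a - 1 - σ) ∈ Set.Icc (-r) 0
    · have hσ : σ ∈ Set.Icc (t - 1) (t + 1) :=
        ⟨by have := hs.2; have := ha.1; linarith, by have := hs.1; have := ha.2; linarith⟩
      calc ‖(w σ (a - 1 - σ))ᵀ *ᵥ ζ σ‖ ≤ d * (Cw * ‖ζ σ‖) :=
            norm_mulVec_le hCw0 _ (fun i j => by
              rw [Matrix.transpose_apply]; exact hwb σ (a - 1 - σ) j i) _
        _ ≤ d * (Cw * Cζ) := by
            have hb := hζb σ hσ
            have : Cw * ‖ζ σ‖ ≤ Cw * Cζ := mul_le_mul_of_nonneg_left hb hCw0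
            exact mul_le_mul_of_nonneg_left this (Nat.cast_nonneg d)
    · rw [hwsupp σ (a - 1 - σ) hs]
      simp only [Matrix.transpose_zero, Matrix.zero_mulVec, norm_zero]
      positivity
  have hGint : ∀ a ∈ Set.Icc t (t + 1), ∀ c e : ℝ,
      IntervalIntegrable (fun θ => w a (θ - a) *ᵥ z θ) volume c e := fun a ha c e =>
    intervalIntegrable_of_bound (hGm a).aestronglyMeasurable _ (hGb a ha) c e
  have hHint : ∀ a ∈ Set.Icc t (t + 1), ∀ c e : ℝ,
      IntervalIntegrable (fun σ => (w σ (a - 1 - σ))ᵀ *ᵥ ζ σ) volume c e := fun a ha c e =>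
    intervalIntegrable_of_bound (hHm a).aestronglyMeasurable _ (hHb a ha) c e
  -- scalar bounds
  have hgb : ∀ a ∈ Set.Icc t (t + 1), ∀ θ : ℝ,
      ‖ζ (a - 1) ⬝ᵥ (w a (θ - a) *ᵥ z θ)‖ ≤ d * (Cζ * (d * (Cw * Cz))) := by
    intro a ha θ
    have hζa : ‖ζ (a - 1)‖ ≤ Cζ := hζb (a - 1) ⟨by have := ha.1; linarith, by have := ha.2; linarith⟩
    calc ‖ζ (a - 1) ⬝ᵥ (w a (θ - a) *ᵥ z θ)‖
        ≤ d * (‖ζ (a - 1)‖ * ‖w a (θ - a) *ᵥ z θ‖) := norm_dot_le _ _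
      _ ≤ d * (Cζ * (d * (Cw * Cz))) := by
          have := hGb a ha θ
          have hmm : ‖ζ (a - 1)‖ * ‖w a (θ - a) *ᵥ z θ‖ ≤ Cζ * (d * (Cw * Cz)) :=
            mul_le_mul hζa this (norm_nonneg _) hCζ0
          exact mul_le_mul_of_nonneg_left hmm (Nat.cast_nonneg d)
  have hhb : ∀ a ∈ Set.Icc t (t + 1), ∀ σ : ℝ,
      ‖ζ σ ⬝ᵥ (w σ (a - 1 - σ) *ᵥ z a)‖ ≤ d * (Cζ * (d * (Cw * Cz))) := by
    intro a ha σ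
    by_cases hs : (a - 1 - σ) ∈ Set.Icc (-r) 0
    · have hσ : σ ∈ Set.Icc (t - 1) (t + 1) :=
        ⟨by have := hs.2; have := ha.1; linarith, by have := hs.1; have := ha.2; linarith⟩
      have hza : ‖z a‖ ≤ Cz := hzb a ⟨by have := ha.1; linarith, ha.2⟩
      have hw1 : ‖w σ (a - 1 - σ) *ᵥ z a‖ ≤ d * (Cw * Cz) := by
        calc ‖w σ (a - 1 - σ) *ᵥ z a‖ ≤ d * (Cw * ‖z a‖) :=
              norm_mulVec_le hCw0 _ (hwb σ (a - 1 - σ)) _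
          _ ≤ d * (Cw * Cz) := by
              have : Cw * ‖z a‖ ≤ Cw * Cz := mul_le_mul_of_nonneg_left hza hCw0
              exact mul_le_mul_of_nonneg_left this (Nat.cast_nonneg d)
      calc ‖ζ σ ⬝ᵥ (w σ (a - 1 - σ) *ᵥ z a)‖
          ≤ d * (‖ζ σ‖ * ‖w σ (a - 1 - σ) *ᵥ z a‖) := norm_dot_le _ _
        _ ≤ d * (Cζ * (d * (Cw * Cz))) := by
            have hmm : ‖ζ σ‖ * ‖w σ (a - 1 - σ) *ᵥ z a‖ ≤ Cζ * (d * (Cw * Cz)) :=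
              mul_le_mul (hζb σ hσ) hw1 (norm_nonneg _) hCζ0
            exact mul_le_mul_of_nonneg_left hmm (Nat.cast_nonneg d)
    · rw [hwsupp σ (a - 1 - σ) hs]
      simp only [Matrix.zero_mulVec, dotProduct_zero, norm_zero]
      positivity
  -- forward expansion
  have hfwd : ∀ a ∈ Set.Ioc t (t + 1),
      (∫ θ in (t - 1)..t, ζ (a - 1) ⬝ᵥ (w a (θ - a) *ᵥ z θ)) +
        (∫ θ in t..(t + 1), ζ (a - 1) ⬝ᵥ (w a (θ - a) *ᵥ z θ)) = ζ (a - 1) ⬝ᵥ z a := by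
    intro a ha
    have haI : a ∈ Set.Icc t (t + 1) := ⟨le_of_lt ha.1, ha.2⟩
    have hzr : z a = ∫ θ in (a - r)..a, w a (θ - a) *ᵥ z θ := hz a ha
    have e1 : (∫ θ in (t - 1)..(a - r), w a (θ - a) *ᵥ z θ) = 0 := by
      refine intervalIntegral_eq_zero (by have := ha.1; linarith) fun x hx => ?_
      rw [hwsupp a (x - a) (fun hmem => by have := hmem.1; have := hx.2; linarith)]
      simp [Matrix.zero_mulVec]
    have e2 : (∫ θ in a..(t + 1), w a (θ - a) *ᵥ z θ) = 0 := by
      refine intervalIntegral_eq_zero ha.2 fun x hx => ?_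
      rw [hwsupp a (x - a) (fun hmem => by have := hmem.2; have := hx.1; linarith)]
      simp [Matrix.zero_mulVec]
    have A1 := integral_add_adjacent_intervals (hGint a haI (t - 1) (a - r)) (hGint a haI (a - r) a)
    have A2 := integral_add_adjacent_intervals (hGint a haI (t - 1) a) (hGint a haI a (t + 1))
    have A3 := integral_add_adjacent_intervals (hGint a haI (t - 1) t) (hGint a haI t (t + 1))
    rw [e1, zero_add] at A1
    rw [e2, add_zero] at A2
    have hza : z a = (∫ θ in (t - 1)..t, w a (θ - a) *ᵥ z θ) +
        (∫ θ in t..(t + 1), w a (θ - a) *ᵥ z θ) := by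
      rw [hzr, A3, ← A2, A1]
    rw [hza, dotProduct_add, dot_intervalIntegral (hGint a haI (t - 1) t),
      dot_intervalIntegral (hGint a haI t (t + 1))]
  -- backward expansion
  have hbwd : ∀ a ∈ Set.Ico t (t + 1),
      (∫ σ in (t - 1)..t, ζ σ ⬝ᵥ (w σ (a - 1 - σ) *ᵥ z a)) +
        (∫ σ in t..(t + 1), ζ σ ⬝ᵥ (w σ (a - 1 - σ) *ᵥ z a)) = ζ (a - 1) ⬝ᵥ z a := by
    intro a ha
    have haI : a ∈ Set.Icc t (t + 1) := ⟨ha.1, le_of_lt ha.2⟩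
    have hζr : ζ (a - 1) = ∫ σ in (a - 1)..(a - 1 + r), (w σ (a - 1 - σ))ᵀ *ᵥ ζ σ :=
      hζ (a - 1) ⟨by have := ha.1; linarith, by have := ha.2; linarith⟩
    have e1 : (∫ σ in (t - 1)..(a - 1), (w σ (a - 1 - σ))ᵀ *ᵥ ζ σ) = 0 := by
      refine intervalIntegral_eq_zero (by have := ha.1; linarith) fun x hx => ?_
      rw [hwsupp x (a - 1 - x) (fun hmem => by have := hmem.2; have := hx.2; linarith)]
      simp [Matrix.transpose_zero, Matrix.zero_mulVec]
    have e2 : (∫ σ in (a - 1 + r)..(t + 1), (w σ (a - 1 - σ))ᵀ *ᵥ ζ σ) = 0 := by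
      refine intervalIntegral_eq_zero (by have := ha.2; linarith) fun x hx => ?_
      rw [hwsupp x (a - 1 - x) (fun hmem => by have := hmem.1; have := hx.1; linarith)]
      simp [Matrix.transpose_zero, Matrix.zero_mulVec]
    have A1 := integral_add_adjacent_intervals (hHint a haI (t - 1) (a - 1))
      (hHint a haI (a - 1) (a - 1 + r))
    have A2 := integral_add_adjacent_intervals (hHint a haI (t - 1) (a - 1 + r))
      (hHint a haI (a - 1 + r) (t + 1))
    have A3 := integral_add_adjacent_intervals (hHint a haI (t - 1) t) (hHint a haI t (t + 1))
    rw [e1, zero_add] at A1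
    rw [e2, add_zero] at A2
    have hζa : ζ (a - 1) = (∫ σ in (t - 1)..t, (w σ (a - 1 - σ))ᵀ *ᵥ ζ σ) +
        (∫ σ in t..(t + 1), (w σ (a - 1 - σ))ᵀ *ᵥ ζ σ) := by
      rw [hζr, A3, ← A2, A1]
    rw [hζa, add_dotProduct, intervalIntegral_dot (hHint a haI (t - 1) t),
      intervalIntegral_dot (hHint a haI t (t + 1))]
    simp_rw [transpose_dot]
  -- LHS transform
  have key1 : (∫ η in (0 : ℝ)..1,
        ζ (t - 1 + η) ⬝ᵥ (∫ β in (-1 : ℝ)..0, w (t + η) (β - η) *ᵥ φ β)) =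
      ∫ a in t..(t + 1), ∫ θ in (t - 1)..t, ζ (a - 1) ⬝ᵥ (w a (θ - a) *ᵥ z θ) := by
    have trans := intervalIntegral.integral_comp_add_left (a := (0 : ℝ)) (b := 1)
      (fun a => ∫ θ in (t - 1)..t, ζ (a - 1) ⬝ᵥ (w a (θ - a) *ᵥ z θ)) t
    rw [add_zero] at trans
    rw [← trans]
    apply intervalIntegral.integral_congr
    intro η hη
    rw [Set.uIcc_of_le (by norm_num : (0 : ℝ) ≤ 1)] at hη
    have haI : t + η ∈ Set.Icc t (t + 1) := ⟨by linarith [hη.1], by linarith [hη.2]⟩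
    show ζ (t - 1 + η) ⬝ᵥ (∫ β in (-1 : ℝ)..0, w (t + η) (β - η) *ᵥ φ β)
        = ∫ θ in (t - 1)..t, ζ (t + η - 1) ⬝ᵥ (w (t + η) (θ - (t + η)) *ᵥ z θ)
    have hin : (∫ β in (-1 : ℝ)..0, w (t + η) (β - η) *ᵥ φ β)
        = ∫ θ in (t - 1)..t, w (t + η) (θ - (t + η)) *ᵥ z θ := by
      have trans2 := intervalIntegral.integral_comp_add_left (a := (-1 : ℝ)) (b := 0)
        (fun θ => w (t + η) (θ - (t + η)) *ᵥ z θ) t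
      rw [add_zero, ← sub_eq_add_neg] at trans2
      rw [← trans2]
      apply intervalIntegral.integral_congr
      intro β hβ
      rw [Set.uIcc_of_le (by norm_num : (-1 : ℝ) ≤ 0)] at hβ
      show w (t + η) (β - η) *ᵥ φ β = w (t + η) ((t + β) - (t + η)) *ᵥ z (t + β)
      rw [hzφ β hβ, show (t + β) - (t + η) = β - η by ring]
    rw [hin, dot_intervalIntegral (hGint (t + η) haI (t - 1) t),
      show t - 1 + η = t + η - 1 by ring]
  -- RHS transform
  have key2 : (∫ η in (0 : ℝ)..1,
        ψ η ⬝ᵥ (∫ β in (-1 : ℝ)..0, w (t + η) (β - η) *ᵥ z (t + 1 + β))) =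
      ∫ σ in t..(t + 1), ∫ a in t..(t + 1), ζ σ ⬝ᵥ (w σ (a - 1 - σ) *ᵥ z a) := by
    have trans := intervalIntegral.integral_comp_add_left (a := (0 : ℝ)) (b := 1)
      (fun σ => ∫ a in t..(t + 1), ζ σ ⬝ᵥ (w σ (a - 1 - σ) *ᵥ z a)) t
    rw [add_zero] at trans
    rw [← trans]
    apply intervalIntegral.integral_congr
    intro η hη
    rw [Set.uIcc_of_le (by norm_num : (0 : ℝ) ≤ 1)] at hη
    show ψ η ⬝ᵥ (∫ β in (-1 : ℝ)..0, w (t + η) (β - η) *ᵥ z (t + 1 + β))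
        = ∫ a in t..(t + 1), ζ (t + η) ⬝ᵥ (w (t + η) (a - 1 - (t + η)) *ᵥ z a)
    have hint : IntervalIntegrable (fun β => w (t + η) (β - η) *ᵥ z (t + 1 + β))
        volume (-1) 0 := by
      refine intervalIntegrable_of_bound'
        (measurable_mulVec'
          (hwm'.comp (measurable_const.prodMk (measurable_id.sub measurable_const)))
          (hzm.comp (measurable_const.add measurable_id))).aestronglyMeasurable
        (d * (Cw * Cz)) (fun x hx => ?_)
      rw [Set.uIoc_of_le (by norm_num : (-1 : ℝ) ≤ 0)] at hx
      have hx1 : t + 1 + x ∈ Set.Icc (t - 1) (t + 1) := ⟨by have := hx.1; linarith, by have := hx.2; linarith⟩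
      calc ‖w (t + η) (x - η) *ᵥ z (t + 1 + x)‖ ≤ d * (Cw * ‖z (t + 1 + x)‖) :=
            norm_mulVec_le hCw0 _ (hwb (t + η) (x - η)) _
        _ ≤ d * (Cw * Cz) := by
            have : Cw * ‖z (t + 1 + x)‖ ≤ Cw * Cz :=
              mul_le_mul_of_nonneg_left (hzb _ hx1) hCw0
            exact mul_le_mul_of_nonneg_left this (Nat.cast_nonneg d)
    have trans2 := intervalIntegral.integral_comp_add_left (a := (-1 : ℝ)) (b := 0)
      (fun a => ζ (t + η) ⬝ᵥ (w (t + η) (a - 1 - (t + η)) *ᵥ z a)) (t + 1)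
    rw [add_zero, show (t + 1 : ℝ) + -1 = t by ring] at trans2
    rw [← trans2, ← hζψ η hη, dot_intervalIntegral hint]
    apply intervalIntegral.integral_congr
    intro β hβ
    show ζ (t + η) ⬝ᵥ (w (t + η) (β - η) *ᵥ z (t + 1 + β))
        = ζ (t + η) ⬝ᵥ (w (t + η) ((t + 1 + β) - 1 - (t + η)) *ᵥ z (t + 1 + β))
    rw [show (t + 1 + β) - 1 - (t + η) = β - η by ring]
  -- joint integrability
  have hJg : ∀ c e : ℝ, Integrable (fun p : ℝ × ℝ => ζ (p.1 - 1) ⬝ᵥ (w p.1 (p.2 - p.1) *ᵥ z p.2))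
      ((volume.restrict (Set.Ioc t (t + 1))).prod (volume.restrict (Set.Ioc c e))) := by
    intro c e
    refine integrable_prod_Ioc ?_ (d * (Cζ * (d * (Cw * Cz))))
      (fun p hp => hgb p.1 (Set.Ioc_subset_Icc_self hp.1) p.2)
    exact measurable_dot (hζm.comp (measurable_fst.sub measurable_const))
      (measurable_mulVec'
        (hwm'.comp (measurable_fst.prodMk (measurable_snd.sub measurable_fst)))
        (hzm.comp measurable_snd))
  have hJg' : Integrable (fun p : ℝ × ℝ => ζ (p.2 - 1) ⬝ᵥ (w p.2 (p.1 - p.2) *ᵥ z p.1))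
      ((volume.restrict (Set.Ioc t (t + 1))).prod (volume.restrict (Set.Ioc t (t + 1)))) := by
    refine integrable_prod_Ioc ?_ (d * (Cζ * (d * (Cw * Cz))))
      (fun p hp => hgb p.2 (Set.Ioc_subset_Icc_self hp.2) p.1)
    exact measurable_dot (hζm.comp (measurable_snd.sub measurable_const))
      (measurable_mulVec'
        (hwm'.comp (measurable_snd.prodMk (measurable_fst.sub measurable_snd)))
        (hzm.comp measurable_fst))
  have hJh : ∀ c e : ℝ, Integrable (fun p : ℝ × ℝ => ζ p.2 ⬝ᵥ (w p.2 (p.1 - 1 - p.2) *ᵥ z p.1))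
      ((volume.restrict (Set.Ioc t (t + 1))).prod (volume.restrict (Set.Ioc c e))) := by
    intro c e
    refine integrable_prod_Ioc ?_ (d * (Cζ * (d * (Cw * Cz))))
      (fun p hp => hhb p.1 (Set.Ioc_subset_Icc_self hp.1) p.2)
    exact measurable_dot (hζm.comp measurable_snd)
      (measurable_mulVec'
        (hwm'.comp (measurable_snd.prodMk ((measurable_fst.sub measurable_const).sub measurable_snd)))
        (hzm.comp measurable_fst))
  have hJh' : Integrable (fun p : ℝ × ℝ => ζ p.1 ⬝ᵥ (w p.1 (p.2 - 1 - p.1) *ᵥ z p.2))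
      ((volume.restrict (Set.Ioc t (t + 1))).prod (volume.restrict (Set.Ioc t (t + 1)))) := by
    refine integrable_prod_Ioc ?_ (d * (Cζ * (d * (Cw * Cz))))
      (fun p hp => hhb p.2 (Set.Ioc_subset_Icc_self hp.2) p.1)
    exact measurable_dot (hζm.comp measurable_fst)
      (measurable_mulVec'
        (hwm'.comp (measurable_fst.prodMk ((measurable_snd.sub measurable_const).sub measurable_fst)))
        (hzm.comp measurable_snd))
  -- Fubini for RHS
  have key3 : (∫ σ in t..(t + 1), ∫ a in t..(t + 1), ζ σ ⬝ᵥ (w σ (a - 1 - σ) *ᵥ z a)) =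
      ∫ a in t..(t + 1), ∫ σ in t..(t + 1), ζ σ ⬝ᵥ (w σ (a - 1 - σ) *ᵥ z a) := by
    simp_rw [intervalIntegral.integral_of_le h1]
    exact MeasureTheory.integral_integral_swap
      (f := fun σ a => ζ σ ⬝ᵥ (w σ (a - 1 - σ) *ᵥ z a)) hJh'
  -- the two correction terms agree
  have key4 : (∫ a in t..(t + 1), ∫ σ in (t - 1)..t, ζ σ ⬝ᵥ (w σ (a - 1 - σ) *ᵥ z a)) =
      ∫ a in t..(t + 1), ∫ θ in t..(t + 1), ζ (a - 1) ⬝ᵥ (w a (θ - a) *ᵥ z θ) := by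
    have inner_eq : ∀ a : ℝ, (∫ σ in (t - 1)..t, ζ σ ⬝ᵥ (w σ (a - 1 - σ) *ᵥ z a))
        = ∫ θ in t..(t + 1), ζ (θ - 1) ⬝ᵥ (w θ (a - θ) *ᵥ z a) := by
      intro a
      have trans := intervalIntegral.integral_comp_sub_right (a := t) (b := t + 1)
        (fun σ => ζ σ ⬝ᵥ (w σ (a - 1 - σ) *ᵥ z a)) 1
      rw [show (t + 1 : ℝ) - 1 = t by ring] at trans
      rw [← trans]
      apply intervalIntegral.integral_congr
      intro θ _
      show ζ (θ - 1) ⬝ᵥ (w (θ - 1) (a - 1 - (θ - 1)) *ᵥ z a) = ζ (θ - 1) ⬝ᵥ (w θ (a - θ) *ᵥ z a)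
      have h2 := hwper (θ - 1) (a - θ)
      rw [show θ - 1 + 1 = θ by ring] at h2
      rw [show a - 1 - (θ - 1) = a - θ by ring, h2]
    have step1 : (∫ a in t..(t + 1), ∫ σ in (t - 1)..t, ζ σ ⬝ᵥ (w σ (a - 1 - σ) *ᵥ z a))
        = ∫ a in t..(t + 1), ∫ θ in t..(t + 1), ζ (θ - 1) ⬝ᵥ (w θ (a - θ) *ᵥ z a) := by
      exact intervalIntegral.integral_congr fun a _ => inner_eq a
    rw [step1]
    simp_rw [intervalIntegral.integral_of_le h1]
    exact MeasureTheory.integral_integral_swap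
      (f := fun a θ => ζ (θ - 1) ⬝ᵥ (w θ (a - θ) *ᵥ z a)) hJg'
  -- sums
  have key5 : (∫ a in t..(t + 1), ∫ θ in (t - 1)..t, ζ (a - 1) ⬝ᵥ (w a (θ - a) *ᵥ z θ)) +
      (∫ a in t..(t + 1), ∫ θ in t..(t + 1), ζ (a - 1) ⬝ᵥ (w a (θ - a) *ᵥ z θ)) =
      ∫ a in t..(t + 1), ζ (a - 1) ⬝ᵥ z a := by
    have hI1 : Integrable (fun a => ∫ θ in Set.Ioc (t - 1) t, ζ (a - 1) ⬝ᵥ (w a (θ - a) *ᵥ z θ))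
        (volume.restrict (Set.Ioc t (t + 1))) := (hJg (t - 1) t).integral_prod_left
    have hI2 : Integrable (fun a => ∫ θ in Set.Ioc t (t + 1), ζ (a - 1) ⬝ᵥ (w a (θ - a) *ᵥ z θ))
        (volume.restrict (Set.Ioc t (t + 1))) := (hJg t (t + 1)).integral_prod_left
    simp_rw [intervalIntegral.integral_of_le h1, intervalIntegral.integral_of_le h2]
    rw [← MeasureTheory.integral_add hI1 hI2]
    refine MeasureTheory.setIntegral_congr_fun measurableSet_Ioc fun a ha => ?_
    have hthis := hfwd a ha
    rw [intervalIntegral.integral_of_le h2, intervalIntegral.integral_of_le h1] at hthis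
    exact hthis
  have key6 : (∫ a in t..(t + 1), ∫ σ in (t - 1)..t, ζ σ ⬝ᵥ (w σ (a - 1 - σ) *ᵥ z a)) +
      (∫ a in t..(t + 1), ∫ σ in t..(t + 1), ζ σ ⬝ᵥ (w σ (a - 1 - σ) *ᵥ z a)) =
      ∫ a in t..(t + 1), ζ (a - 1) ⬝ᵥ z a := by
    have hI3 : Integrable (fun a => ∫ σ in Set.Ioc (t - 1) t, ζ σ ⬝ᵥ (w σ (a - 1 - σ) *ᵥ z a))
        (volume.restrict (Set.Ioc t (t + 1))) := (hJh (t - 1) t).integral_prod_left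
    have hI4 : Integrable (fun a => ∫ σ in Set.Ioc t (t + 1), ζ σ ⬝ᵥ (w σ (a - 1 - σ) *ᵥ z a))
        (volume.restrict (Set.Ioc t (t + 1))) := (hJh t (t + 1)).integral_prod_left
    simp_rw [intervalIntegral.integral_of_le h1, intervalIntegral.integral_of_le h2]
    rw [← MeasureTheory.integral_add hI3 hI4]
    refine MeasureTheory.setIntegral_congr_ae measurableSet_Ioc ?_
    have hae : ∀ᵐ a : ℝ ∂volume, a ≠ t + 1 := by
      have h0 : {a : ℝ | ¬a ≠ t + 1} = {t + 1} := by ext x; simp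
      rw [MeasureTheory.ae_iff, h0]
      exact measure_singleton _
    filter_upwards [hae] with a hane ha
    have ham : a ∈ Set.Ico t (t + 1) := ⟨le_of_lt ha.1, lt_of_le_of_ne ha.2 hane⟩
    have hthis := hbwd a ham
    rw [intervalIntegral.integral_of_le h2, intervalIntegral.integral_of_le h1] at hthis
    exact hthis
  rw [key1, key2, key3]
  linarith [key4, key5, key6]
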